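/- arXiv:1503.02999 — 3 statements merged into one kernel-verified Lean document; each statement's English description precedes it below -/
import Mathlib

section
/- Let κ > 0, define T_κ : ℝ² → ℝ² by T_κ y = |y|^{κ−1} y for y ≠ 0 and T_κ 0 = 0, let ψ : ℝ² → ℝ be differentiable at a point y ≠ 0, and set φ = ψ ∘ T_κ^{-1} and x = T_κ y. Then min{1, κ²} |∇φ(x)|² ≤ |∇ψ(y)|² |y|^{2 − 2κ} ≤ max{1, κ²} |∇φ(x)|². -/
noncomputable abbrev E2 : Type := EuclideanSpace ℝ (Fin 2)

/-- The transformation T_κ y = |y|^{κ-1} y (with T_κ 0 = 0). -/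
noncomputable def Tk (κ : ℝ) (y : E2) : E2 := ‖y‖ ^ (κ - 1) • y

open Real ContinuousLinearMap

lemma hasFDerivAt_Tk (l : ℝ) (x : E2) (hx : x ≠ 0) :
    HasFDerivAt (Tk l)
      (‖x‖ ^ (l - 1) • ContinuousLinearMap.id ℝ E2 +
        (innerSL ℝ x).smulRight (((l - 1) * ‖x‖ ^ (l - 3)) • x)) x := by
  have hR : (0:ℝ) < ‖x‖ := norm_pos_iff.2 hx
  have h1 : HasFDerivAt (fun z : E2 => (inner ℝ z z : ℝ))
      ((fderivInnerCLM ℝ (x, x)).comp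
        ((ContinuousLinearMap.id ℝ E2).prod (ContinuousLinearMap.id ℝ E2))) x :=
    (hasFDerivAt_id x).inner ℝ (hasFDerivAt_id x)
  have hpos : (0:ℝ) < (inner ℝ x x : ℝ) := by
    rw [real_inner_self_eq_norm_sq]; positivity
  have h2 := (h1.rpow_const (p := (l-1)/2) (Or.inl (ne_of_gt hpos)))
  have h3 := h2.smul (hasFDerivAt_id x)
  have hfun : ((fun z : E2 => (inner ℝ z z : ℝ) ^ ((l-1)/2)) • _root_.id) = Tk l := by
    funext z
    show (inner ℝ z z : ℝ) ^ ((l-1)/2) • _root_.id z = Tk l z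
    unfold Tk
    rw [real_inner_self_eq_norm_sq, ← Real.rpow_natCast ‖z‖ 2, ← Real.rpow_mul (norm_nonneg z)]
    norm_num
    rw [show 2*((l-1)/2) = l - 1 by ring]
  rw [hfun] at h3
  refine HasFDerivAt.congr_fderiv h3 ?_
  refine ContinuousLinearMap.ext fun h => ?_
  simp only [ContinuousLinearMap.add_apply, ContinuousLinearMap.smul_apply,
    ContinuousLinearMap.id_apply, ContinuousLinearMap.smulRight_apply, innerSL_apply_apply,
    ContinuousLinearMap.coe_comp', Function.comp_apply, ContinuousLinearMap.prod_apply,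
    fderivInnerCLM_apply, id_eq]
  have e1 : (inner ℝ x x : ℝ) ^ ((l-1)/2) = ‖x‖ ^ (l - 1) := by
    rw [real_inner_self_eq_norm_sq, ← Real.rpow_natCast ‖x‖ 2, ← Real.rpow_mul (norm_nonneg x)]
    norm_num
    rw [show 2*((l-1)/2) = l - 1 by ring]
  have e2 : (inner ℝ x x : ℝ) ^ ((l-1)/2 - 1) = ‖x‖ ^ (l - 3) := by
    rw [real_inner_self_eq_norm_sq, ← Real.rpow_natCast ‖x‖ 2, ← Real.rpow_mul (norm_nonneg x)]
    norm_num
    rw [show 2*((l-1)/2-1) = l - 3 by ring]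
  rw [e1, e2, real_inner_comm h x]
  simp only [smul_eq_mul]
  module

set_option maxHeartbeats 1000000 in
theorem Tk_gradient_estimate (κ : ℝ) (hκ : 0 < κ)
    (ψ : E2 → ℝ) (φ : E2 → ℝ) (hφ : φ = ψ ∘ Tk (1 / κ))
    (y : E2) (hy : y ≠ 0) (hψ : DifferentiableAt ℝ ψ y)
    (x : E2) (hx : x = Tk κ y) :
    min 1 (κ ^ 2) * ‖gradient φ x‖ ^ 2 ≤ ‖gradient ψ y‖ ^ 2 * ‖y‖ ^ (2 - 2 * κ) ∧
    ‖gradient ψ y‖ ^ 2 * ‖y‖ ^ (2 - 2 * κ) ≤ max 1 (κ ^ 2) * ‖gradient φ x‖ ^ 2 := by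
  have hκ' : κ ≠ 0 := ne_of_gt hκ
  set l : ℝ := 1 / κ with hl
  set r : ℝ := ‖y‖ with hrdef
  have hr : 0 < r := norm_pos_iff.2 hy
  have hxnorm : ‖x‖ = r ^ κ := by
    rw [hx]
    unfold Tk
    rw [norm_smul, Real.norm_eq_abs, abs_of_nonneg (Real.rpow_nonneg (norm_nonneg y) _),
      ← hrdef, ← Real.rpow_add_one hr.ne']
    norm_num
  have hR : (0:ℝ) < ‖x‖ := by rw [hxnorm]; positivity
  have hx0 : x ≠ 0 := norm_pos_iff.1 hR
  have hTx : Tk l x = y := by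
    unfold Tk
    rw [hxnorm, hx]
    unfold Tk
    rw [← hrdef, smul_smul, ← Real.rpow_mul hr.le, ← Real.rpow_add hr]
    rw [show κ * (l - 1) + (κ - 1) = 0 by rw [hl]; field_simp; ring]
    rw [Real.rpow_zero, one_smul]
  set g : E2 := gradient ψ y with hgdef
  have hg : HasFDerivAt ψ (InnerProductSpace.toDual ℝ E2 g) y :=
    hasGradientAt_iff_hasFDerivAt.1 hψ.hasGradientAt
  have hT := hasFDerivAt_Tk l x hx0
  have hcomp : HasFDerivAt φ ((InnerProductSpace.toDual ℝ E2 g).comp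
      (‖x‖ ^ (l - 1) • ContinuousLinearMap.id ℝ E2 +
        (innerSL ℝ x).smulRight (((l - 1) * ‖x‖ ^ (l - 3)) • x))) x := by
    rw [hφ]
    exact HasFDerivAt.comp x (hTx ▸ hg) hT
  set t : ℝ := inner ℝ x g with htdef
  set v : E2 := ‖x‖ ^ (l - 1) • g + ((l - 1) * ‖x‖ ^ (l - 3) * t) • x with hvdef
  have heq : (InnerProductSpace.toDual ℝ E2 g).comp
      (‖x‖ ^ (l - 1) • ContinuousLinearMap.id ℝ E2 +
        (innerSL ℝ x).smulRight (((l - 1) * ‖x‖ ^ (l - 3)) • x)) =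
      InnerProductSpace.toDual ℝ E2 v := by
    refine ContinuousLinearMap.ext fun h => ?_
    simp only [ContinuousLinearMap.coe_comp', Function.comp_apply,
      InnerProductSpace.toDual_apply_apply, ContinuousLinearMap.add_apply,
      ContinuousLinearMap.smul_apply, ContinuousLinearMap.id_apply,
      ContinuousLinearMap.smulRight_apply, innerSL_apply_apply, hvdef,
      inner_add_right, inner_add_left, real_inner_smul_left, real_inner_smul_right]
    have hc1 : (inner ℝ g x : ℝ) = t := by rw [htdef]; exact real_inner_comm x g
    rw [hc1]
    ring
  have hgrad : gradient φ x = v :=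
    HasGradientAt.gradient (hasGradientAt_iff_hasFDerivAt.2 (heq ▸ hcomp))
  set R : ℝ := ‖x‖ with hRdef
  set G : ℝ := ‖g‖ with hGdef
  set P : ℝ := r ^ (2 - 2*κ) with hPdef
  have hP : (0:ℝ) < P := by rw [hPdef]; positivity
  have hnv : ‖v‖^2 = (R^(l-1))^2*G^2 + 2*(l-1)*R^(l-1)*R^(l-3)*t^2
      + (l-1)^2*(R^(l-3))^2*t^2*R^2 := by
    have hc1 : (inner ℝ g x : ℝ) = t := by rw [htdef]; exact real_inner_comm x g
    rw [hvdef, norm_add_sq_real, norm_smul, norm_smul, real_inner_smul_left,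
      real_inner_smul_right, hc1, Real.norm_eq_abs, Real.norm_eq_abs,
      mul_pow, mul_pow, sq_abs, sq_abs]
    rw [← hGdef, ← hRdef]
    ring
  have e3 : R^(l-1) * R^(l-1) = P := by
    rw [hxnorm]
    simp only [← Real.rpow_natCast, ← Real.rpow_mul hr.le, ← Real.rpow_add hr]
    rw [hPdef]
    congr 1
    rw [hl]
    field_simp
    ring
  have e4 : R^(l-1) * R^(l-3) * (R*R) = P := by
    rw [hxnorm]
    simp only [← Real.rpow_natCast, ← Real.rpow_mul hr.le, ← Real.rpow_add hr]
    rw [hPdef]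
    congr 1
    rw [hl]
    field_simp
    ring
  have e5 : R^(l-3) * R^(l-3) * (R*R) * (R*R) = P := by
    rw [hxnorm]
    simp only [← Real.rpow_natCast, ← Real.rpow_mul hr.le, ← Real.rpow_add hr]
    rw [hPdef]
    congr 1
    rw [hl]
    field_simp
    ring
  have hv2 : ‖v‖^2 * (R*R) = P*G^2*(R*R) + P*(l^2-1)*t^2 := by
    rw [hnv]
    linear_combination (G^2*(R*R)) * e3 + (2*(l-1)*t^2) * e4 + ((l-1)^2*t^2) * e5
  have hts : t^2 ≤ (R*R)*G^2 := by
    have := real_inner_mul_inner_self_le x g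
    rw [real_inner_self_eq_norm_sq, real_inner_self_eq_norm_sq] at this
    calc t^2 = t*t := sq t
      _ ≤ ‖x‖^2 * ‖g‖^2 := this
      _ = (R*R)*G^2 := by rw [← hRdef, ← hGdef]; ring
  have key : κ^2 * (l^2 - 1) = 1 - κ^2 := by
    rw [hl]; field_simp
  have hκ2 : (0:ℝ) < κ^2 := by positivity
  have hRR : (0:ℝ) < R*R := by positivity
  rw [hgrad]
  clear_value v
  clear hT hcomp heq hvdef hgrad hnv
  generalize hW : ‖v‖ ^ 2 = W at hv2 ⊢
  clear_value l r g t R G P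
  have h1 : κ^2*(W*(R*R)) = κ^2*(P*G^2)*(R*R) + (1-κ^2)*(P*t^2) := by
    linear_combination κ^2*hv2 + (P*t^2)*key
  have h3 : κ^2*(P*G^2)*(R*R) + (1-κ^2)*(P*((R*R)*G^2)) = G^2*P*(R*R) := by ring
  constructor
  · refine le_of_mul_le_mul_right ?_ hRR
    rcases le_total (κ^2) 1 with hA | hA
    · rw [min_eq_right hA]
      have h2 : (1-κ^2)*(P*t^2) ≤ (1-κ^2)*(P*((R*R)*G^2)) :=
        mul_le_mul_of_nonneg_left (mul_le_mul_of_nonneg_left hts hP.le) (by linarith)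
      linarith [h1, h2, h3]
    · rw [min_eq_left hA]
      have hll : (0:ℝ) ≤ 1 - l^2 := by nlinarith [key, hκ2, hA]
      have hs : P*(l^2-1)*t^2 ≤ 0 := by
        have := mul_nonneg (mul_nonneg hP.le hll) (sq_nonneg t)
        nlinarith [this]
      linarith [hv2, hs]
  · refine le_of_mul_le_mul_right ?_ hRR
    rcases le_total (κ^2) 1 with hA | hA
    · rw [max_eq_left hA]
      have hll : (0:ℝ) ≤ l^2 - 1 := by nlinarith [key, hκ2, hA]
      have hs : 0 ≤ P*(l^2-1)*t^2 := mul_nonneg (mul_nonneg hP.le hll) (sq_nonneg t)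
      linarith [hv2, hs]
    · rw [max_eq_right hA]
      have h2 : (1-κ^2)*(P*((R*R)*G^2)) ≤ (1-κ^2)*(P*t^2) :=
        mul_le_mul_of_nonpos_left (mul_le_mul_of_nonneg_left hts hP.le) (by linarith)
      linarith [h1, h2, h3]
end

section
/- Let α > 0, set κ = 2/(α+2), let f : ℝ → ℝ be continuous, let 0 ≤ a < b, and let U : ℝ → ℝ be twice differentiable on (a, b) and satisfy the radial Hénon ODE U''(r) + U'(r)/r + r^α f(U(r)) = 0 for all r ∈ (a, b). Then the function V defined by V(s) = U(s^κ) is twice differentiable on (a^{1/κ}, b^{1/κ}) and satisfies V''(s) + V'(s)/s + κ² f(V(s)) = 0 for all s ∈ (a^{1/κ}, b^{1/κ}). -/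
open Set

theorem henon_ode_change_of_variable
    (α : ℝ) (hα : 0 < α) (κ : ℝ) (hκ : κ = 2 / (α + 2))
    (f : ℝ → ℝ) (hf : Continuous f)
    (a b : ℝ) (hab : 0 ≤ a ∧ a < b)
    (U : ℝ → ℝ)
    (hU₁ : DifferentiableOn ℝ U (Ioo a b))
    (hU₂ : DifferentiableOn ℝ (deriv U) (Ioo a b))
    (hU_eq : ∀ r ∈ Ioo a b,
      deriv (deriv U) r + deriv U r / r + r ^ α * f (U r) = 0)
    (V : ℝ → ℝ) (hV : V = fun s => U (s ^ κ)) :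
    DifferentiableOn ℝ V (Ioo (a ^ (1 / κ)) (b ^ (1 / κ))) ∧
    DifferentiableOn ℝ (deriv V) (Ioo (a ^ (1 / κ)) (b ^ (1 / κ))) ∧
    ∀ s ∈ Ioo (a ^ (1 / κ)) (b ^ (1 / κ)),
      deriv (deriv V) s + deriv V s / s + κ ^ 2 * f (V s) = 0 := by
  obtain ⟨ha, hab'⟩ := hab
  have hα2 : (0:ℝ) < α + 2 := by linarith
  have hκ0 : 0 < κ := by rw [hκ]; positivity
  have hκne : κ ≠ 0 := hκ0.ne'
  have hmem : ∀ s ∈ Ioo (a ^ (1 / κ)) (b ^ (1 / κ)), 0 < s ∧ s ^ κ ∈ Ioo a b := by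
    intro s hs
    have h0 : (0:ℝ) ≤ a ^ (1/κ) := Real.rpow_nonneg ha _
    have hs0 : 0 < s := lt_of_le_of_lt h0 hs.1
    refine ⟨hs0, ?_, ?_⟩
    · have := Real.rpow_lt_rpow h0 hs.1 hκ0
      rwa [← Real.rpow_mul ha, one_div_mul_cancel hκne, Real.rpow_one] at this
    · have hb0 : (0:ℝ) ≤ b := le_of_lt (lt_of_le_of_lt ha hab')
      have := Real.rpow_lt_rpow hs0.le hs.2 hκ0
      rwa [← Real.rpow_mul hb0, one_div_mul_cancel hκne, Real.rpow_one] at this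
  have hD1 : ∀ s ∈ Ioo (a ^ (1 / κ)) (b ^ (1 / κ)),
      HasDerivAt V (deriv U (s ^ κ) * (κ * s ^ (κ - 1))) s := by
    intro s hs
    obtain ⟨hs0, hr⟩ := hmem s hs
    have hrpow : HasDerivAt (fun x : ℝ => x ^ κ) (κ * s ^ (κ - 1)) s :=
      Real.hasDerivAt_rpow_const (Or.inl hs0.ne')
    have hUr : HasDerivAt U (deriv U (s ^ κ)) (s ^ κ) :=
      (hU₁.differentiableAt (isOpen_Ioo.mem_nhds hr)).hasDerivAt
    have := hUr.comp s hrpow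
    rw [hV]; exact this
  have hVderiv : ∀ s ∈ Ioo (a ^ (1 / κ)) (b ^ (1 / κ)),
      deriv V s = deriv U (s ^ κ) * (κ * s ^ (κ - 1)) :=
    fun s hs => (hD1 s hs).deriv
  have hD2 : ∀ s ∈ Ioo (a ^ (1 / κ)) (b ^ (1 / κ)),
      HasDerivAt (deriv V)
        ((deriv (deriv U) (s ^ κ) * (κ * s ^ (κ - 1))) * (κ * s ^ (κ - 1))
          + deriv U (s ^ κ) * (κ * ((κ - 1) * s ^ (κ - 1 - 1)))) s := by
    intro s hs
    obtain ⟨hs0, hr⟩ := hmem s hs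
    have hrpow : HasDerivAt (fun x : ℝ => x ^ κ) (κ * s ^ (κ - 1)) s :=
      Real.hasDerivAt_rpow_const (Or.inl hs0.ne')
    have hU'r : HasDerivAt (deriv U) (deriv (deriv U) (s ^ κ)) (s ^ κ) :=
      (hU₂.differentiableAt (isOpen_Ioo.mem_nhds hr)).hasDerivAt
    have h1 : HasDerivAt (fun t : ℝ => deriv U (t ^ κ))
        (deriv (deriv U) (s ^ κ) * (κ * s ^ (κ - 1))) s := by
      exact hU'r.comp s hrpow
    have h2 : HasDerivAt (fun t : ℝ => κ * t ^ (κ - 1))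
        (κ * ((κ - 1) * s ^ (κ - 1 - 1))) s :=
      (Real.hasDerivAt_rpow_const (Or.inl hs0.ne')).const_mul κ
    refine (h1.mul h2).congr_of_eventuallyEq ?_
    filter_upwards [isOpen_Ioo.mem_nhds hs] with t ht
    exact hVderiv t ht
  refine ⟨fun s hs => (hD1 s hs).differentiableAt.differentiableWithinAt,
    fun s hs => (hD2 s hs).differentiableAt.differentiableWithinAt, ?_⟩
  intro s hs
  obtain ⟨hs0, hr⟩ := hmem s hs
  have hEQ := hU_eq (s ^ κ) hr
  rw [(hD2 s hs).deriv, hVderiv s hs, hV]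
  set A := deriv (deriv U) (s ^ κ) with hA
  set B := deriv U (s ^ κ) with hB
  set F := f (U (s ^ κ)) with hF
  have hX : (0:ℝ) < s ^ κ := Real.rpow_pos_of_pos hs0 κ
  have e1 : s ^ (κ - 1) = s ^ κ / s := by
    rw [Real.rpow_sub hs0, Real.rpow_one]
  have e2 : s ^ (κ - 1 - 1) = s ^ κ / (s * s) := by
    rw [Real.rpow_sub hs0, Real.rpow_sub hs0, Real.rpow_one]; ring
  have e3 : (s ^ κ) ^ α = s ^ (κ * α) := (Real.rpow_mul hs0.le κ α).symm
  have e4 : s ^ (κ * α) * (s ^ κ * s ^ κ) = s * s := by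
    rw [← Real.rpow_add hs0, ← Real.rpow_add hs0]
    have h5 : κ * α + (κ + κ) = 1 + 1 := by
      rw [hκ]; field_simp; ring
    rw [h5, Real.rpow_add hs0, Real.rpow_one]
  rw [e3] at hEQ
  have hAeq : A = -(B / (s ^ κ)) - s ^ (κ * α) * F := by linarith
  rw [e1, e2, hAeq]
  have hsne : s ≠ 0 := hs0.ne'
  have hXne : s ^ κ ≠ 0 := hX.ne'
  field_simp
  linear_combination (-(κ ^ 2 * F)) * e4
end

section
/- Let Ω ⊂ ℝ² be either an open ball {x : |x| < R} (R > 0) or an open annulus {x : a < |x| < b} (0 < a < b) centered at the origin, let α > 0, set κ = 2/(α+2) and Ω_κ = T_κ^{-1}(Ω), and let f : ℝ → ℝ be continuously differentiable. Let v, ψ : ℝ² → ℝ be continuously differentiable on the closure of Ω_κ, and set u = v ∘ T_κ^{-1} and φ = ψ ∘ T_κ^{-1}. Assume that the integrals ∫_{Ω_κ} |∇ψ|² dy, ∫_{Ω_κ} |f'(v)| ψ² dy, ∫_Ω |∇φ|² dx and ∫_Ω |x|^α |f'(u)| φ² dx are all finite. Then ∫_{Ω_κ} ( |∇ψ(y)|²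 − κ² f'(v(y)) ψ(y)² ) dy ≥ κ ∫_Ω ( |∇φ(x)|² − |x|^α f'(u(x)) φ(x)² ) dx. -/
open MeasureTheory

lemma norm_Tk (κ : ℝ) (hκ : 0 < κ) (y : E2) : ‖Tk κ y‖ = ‖y‖ ^ κ := by
  rcases eq_or_ne y 0 with rfl | hy
  · simp [Tk, Real.zero_rpow hκ.ne']
  · have h : (0:ℝ) < ‖y‖ := norm_pos_iff.2 hy
    rw [Tk, norm_smul, Real.norm_eq_abs, Real.abs_rpow_of_nonneg (norm_nonneg y),
      abs_of_nonneg (norm_nonneg y)]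
    nth_rewrite 2 [← Real.rpow_one ‖y‖]
    rw [← Real.rpow_add h]; ring_nf

lemma Tk_comp (a b : ℝ) (hb : 0 < b) (x : E2) : Tk a (Tk b x) = Tk (a*b) x := by
  rcases eq_or_ne x 0 with rfl | hx
  · simp [Tk]
  · have h : (0:ℝ) < ‖x‖ := norm_pos_iff.2 hx
    rw [show Tk a (Tk b x) = ‖Tk b x‖ ^ (a-1) • Tk b x from rfl, norm_Tk b hb x, Tk, Tk, smul_smul]
    congr 1
    rw [← Real.rpow_mul (norm_nonneg x), ← Real.rpow_add h]
    ring_nf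

lemma Tk_one (x : E2) : Tk 1 x = x := by simp [Tk]

lemma Tk_invol (κ : ℝ) (hκ : 0 < κ) (x : E2) : Tk κ (Tk (1/κ) x) = x := by
  rw [Tk_comp κ (1/κ) (by positivity), mul_one_div_cancel hκ.ne', Tk_one]

lemma Tk_invol' (κ : ℝ) (hκ : 0 < κ) (x : E2) : Tk (1/κ) (Tk κ x) = x := by
  rw [Tk_comp (1/κ) κ hκ, one_div_mul_cancel hκ.ne', Tk_one]

lemma Tk_zero (κ : ℝ) : Tk κ 0 = 0 := by simp [Tk]

/-- The derivative of `Tk κ` at `y ≠ 0`. -/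
noncomputable def Dk (κ : ℝ) (y : E2) : E2 →L[ℝ] E2 :=
  ‖y‖ ^ (κ - 1) • ContinuousLinearMap.id ℝ E2
    + ((κ - 1) * ‖y‖ ^ (κ - 3)) • (innerSL ℝ y).smulRight y

lemma hasFDerivAt_Tk_s19 (κ : ℝ) {y : E2} (hy : y ≠ 0) : HasFDerivAt (Tk κ) (Dk κ y) y := by
  have hn : (0:ℝ) < ‖y‖ := norm_pos_iff.2 hy
  set p : ℝ := (κ - 1) / 2 with hp
  have hsq : HasFDerivAt (fun z : E2 => ‖z‖ ^ 2) (2 • (innerSL ℝ y)) y :=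
    (hasStrictFDerivAt_norm_sq y).hasFDerivAt
  have hrpow : HasDerivAt (fun t : ℝ => t ^ p) (p * (‖y‖^2) ^ (p - 1)) (‖y‖^2) :=
    Real.hasDerivAt_rpow_const (Or.inl (by positivity))
  have hc : HasFDerivAt (fun z : E2 => (‖z‖^2 : ℝ) ^ p)
      ((p * (‖y‖^2) ^ (p-1)) • (2 • (innerSL ℝ y))) y := by
    have h := hrpow.comp_hasFDerivAt y hsq; exact h
  have key : ∀ z : E2, (‖z‖^2 : ℝ) ^ p = ‖z‖ ^ (κ - 1) := by
    intro z
    rw [← Real.rpow_natCast ‖z‖ 2, ← Real.rpow_mul (norm_nonneg z)]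
    congr 1; rw [hp]; ring
  have hc' : HasFDerivAt (fun z : E2 => ‖z‖ ^ (κ-1))
      ((p * (‖y‖^2) ^ (p-1)) • (2 • (innerSL ℝ y))) y := by
    simpa only [key] using hc
  have := hc'.smul (hasFDerivAt_id y)
  have heq : HasFDerivAt (Tk κ) (‖y‖ ^ (κ-1) • ContinuousLinearMap.id ℝ E2 +
      ((p * (‖y‖ ^ 2) ^ (p - 1)) • 2 • (innerSL ℝ) y).smulRight y) y := this
  convert heq using 1
  ext h
  have e1 : (‖y‖^2 : ℝ) ^ (p - 1) = ‖y‖ ^ (κ - 3) := by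
    rw [← Real.rpow_natCast ‖y‖ 2, ← Real.rpow_mul (norm_nonneg y)]
    congr 1; rw [hp]; ring
  simp only [Dk, ContinuousLinearMap.add_apply, ContinuousLinearMap.smul_apply,
    ContinuousLinearMap.id_apply, ContinuousLinearMap.smulRight_apply,
    ContinuousLinearMap.coe_smul', Pi.smul_apply, e1]
  simp only [PiLp.add_apply, PiLp.smul_apply, smul_eq_mul, hp]
  ring

lemma Dk_apply (κ : ℝ) (y g : E2) :
    Dk κ y g = ‖y‖ ^ (κ-1) • g + (((κ-1) * ‖y‖ ^ (κ-3)) * (inner ℝ y g : ℝ)) • y := by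
  simp [Dk, mul_smul]

lemma det_Dk (κ : ℝ) (y : E2) :
    (Dk κ y).det = (‖y‖ ^ (κ-1))^2 + (‖y‖ ^ (κ-1)) * ((κ-1) * ‖y‖ ^ (κ-3)) * ‖y‖^2 := by
  set a : ℝ := ‖y‖ ^ (κ-1)
  set c : ℝ := (κ-1) * ‖y‖ ^ (κ-3)
  have hdet := LinearMap.det_toMatrix (EuclideanSpace.basisFun (Fin 2) ℝ).toBasis
    ((Dk κ y) : E2 →ₗ[ℝ] E2)
  rw [ContinuousLinearMap.det, ← hdet, Matrix.det_fin_two]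
  have entry : ∀ i j, (LinearMap.toMatrix (EuclideanSpace.basisFun (Fin 2) ℝ).toBasis
      (EuclideanSpace.basisFun (Fin 2) ℝ).toBasis ((Dk κ y) : E2 →ₗ[ℝ] E2)) i j
      = (if i = j then a else 0) + c * y j * y i := by
    intro i j
    rw [LinearMap.toMatrix_apply]
    simp [Dk, a, c, EuclideanSpace.basisFun_apply, real_inner_comm, mul_assoc,
        EuclideanSpace.inner_single_right]
  have hn : ‖y‖^2 = y 0 ^ 2 + y 1 ^ 2 := by
    rw [EuclideanSpace.norm_eq, Real.sq_sqrt (by positivity)]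
    simp [Fin.sum_univ_two, sq]
  rw [entry, entry, entry, entry, hn]
  simp
  ring

lemma norm_Dk_apply_sq (κ : ℝ) (y g : E2) :
    ‖Dk κ y g‖^2 = (‖y‖^(κ-1))^2*‖g‖^2
      + (2*(‖y‖^(κ-1))*((κ-1) * ‖y‖ ^ (κ-3)) + ((κ-1) * ‖y‖ ^ (κ-3))^2*‖y‖^2)
        * (inner ℝ y g : ℝ)^2 := by
  rw [Dk_apply, norm_add_sq_real]
  simp [norm_smul, real_inner_smul_left, real_inner_smul_right, mul_pow, real_inner_comm g y]
  ring

lemma Dk_symm (κ : ℝ) (y g h : E2) :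
    (inner ℝ (Dk κ y g) h : ℝ) = inner ℝ g (Dk κ y h) := by
  rw [Dk_apply, Dk_apply]
  simp [inner_add_left, inner_add_right, real_inner_smul_left, real_inner_smul_right,
    real_inner_comm y h, real_inner_comm y g]
  ring

lemma det_Dk' (κ : ℝ) {y : E2} (hy : y ≠ 0) :
    (Dk κ y).det = κ * ‖y‖ ^ (2*κ-2) := by
  have hn : (0:ℝ) < ‖y‖ := norm_pos_iff.2 hy
  have e1 : (‖y‖ ^ (κ-1) : ℝ)^2 = ‖y‖ ^ (2*κ-2) := by
    rw [← Real.rpow_natCast (‖y‖ ^ (κ-1)) 2, ← Real.rpow_mul (norm_nonneg y)]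
    norm_num; ring_nf
  have e2 : (‖y‖ ^ (κ-1) : ℝ) * (‖y‖ ^ (κ-3)) * ‖y‖^2 = ‖y‖ ^ (2*κ-2) := by
    rw [← Real.rpow_natCast ‖y‖ 2, ← Real.rpow_add hn, ← Real.rpow_add hn]
    norm_num; ring_nf
  rw [det_Dk, e1, show ‖y‖^(κ-1)*((κ-1)*‖y‖^(κ-3))*‖y‖^2
    = (κ-1)*(‖y‖^(κ-1)*‖y‖^(κ-3)*‖y‖^2) from by ring, e2]
  ring

lemma abs_det_Dk (κ : ℝ) (hκ : 0 < κ) {y : E2} (hy : y ≠ 0) :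
    |(Dk κ y).det| = κ * ‖y‖ ^ (2*κ-2) := by
  have hn : (0:ℝ) < ‖y‖ := norm_pos_iff.2 hy
  rw [det_Dk' κ hy, abs_of_nonneg (by positivity)]

lemma sq_norm_Dk_ge (κ : ℝ) (hκ0 : 0 < κ) (hκ1 : κ ≤ 1) {y : E2} (hy : y ≠ 0) (g : E2) :
    κ * (κ * ‖y‖ ^ (2*κ-2)) * ‖g‖^2 ≤ ‖Dk κ y g‖^2 := by
  have hn : (0:ℝ) < ‖y‖ := norm_pos_iff.2 hy
  have ha : (0:ℝ) < ‖y‖ ^ (κ-1) := Real.rpow_pos_of_pos hn _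
  have hm : (0:ℝ) < ‖y‖ ^ (κ-3) := Real.rpow_pos_of_pos hn _
  have e1 : (‖y‖ ^ (κ-1) : ℝ)^2 = ‖y‖ ^ (2*κ-2) := by
    rw [← Real.rpow_natCast (‖y‖ ^ (κ-1)) 2, ← Real.rpow_mul (norm_nonneg y)]
    norm_num; ring_nf
  have e2 : (‖y‖ ^ (κ-3) : ℝ) * ‖y‖^2 = ‖y‖ ^ (κ-1) := by
    rw [← Real.rpow_natCast ‖y‖ 2, ← Real.rpow_add hn]
    norm_num; congr 1; ring
  have cs : (inner ℝ y g : ℝ)^2 ≤ ‖y‖^2 * ‖g‖^2 := by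
    have := real_inner_mul_inner_self_le y g
    rw [real_inner_self_eq_norm_sq, real_inner_self_eq_norm_sq] at this
    nlinarith [this]
  rw [norm_Dk_apply_sq, ← e1]
  set a : ℝ := ‖y‖ ^ (κ-1)
  set m : ℝ := ‖y‖ ^ (κ-3)
  set n : ℝ := ‖y‖
  set t : ℝ := (inner ℝ y g : ℝ)
  -- a = m * n^2 (e2 : m * n^2 = a)
  -- RHS - LHS = (1-κ^2) * m^2 * n^2 * (n^2 * ‖g‖^2 - t^2) ≥ 0
  have key : a^2*‖g‖^2 + (2*a*((κ-1)*m) + ((κ-1)*m)^2*n^2) * t^2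
      - κ * (κ * a^2) * ‖g‖^2 = (1-κ^2) * m^2 * (n^2 * (n^2 * ‖g‖^2) - n^2 * t^2) := by
    rw [← e2]; ring
  nlinarith [mul_nonneg (mul_nonneg (by nlinarith : (0:ℝ) ≤ 1 - κ^2) (sq_nonneg m))
    (mul_nonneg (sq_nonneg n) (sub_nonneg.2 cs)), key, sq_nonneg n, sq_nonneg m]

lemma rpow_lt_iff_left {a x κ : ℝ} (ha : 0 ≤ a) (hx : 0 ≤ x) (hκ : 0 < κ) :
    a < x ^ κ ↔ a ^ (1/κ) < x := by
  constructor
  · intro h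
    have h2 := Real.rpow_lt_rpow ha h (by positivity : (0:ℝ) < 1/κ)
    rwa [← Real.rpow_mul hx, mul_one_div_cancel hκ.ne', Real.rpow_one] at h2
  · intro h
    have h2 := Real.rpow_lt_rpow (Real.rpow_nonneg ha _) h hκ
    rwa [← Real.rpow_mul ha, one_div_mul_cancel hκ.ne', Real.rpow_one] at h2

lemma rpow_lt_iff_right {b x κ : ℝ} (hb : 0 ≤ b) (hx : 0 ≤ x) (hκ : 0 < κ) :
    x ^ κ < b ↔ x < b ^ (1/κ) := by
  constructor
  · intro h
    have h2 := Real.rpow_lt_rpow (Real.rpow_nonneg hx _) h (by positivity : (0:ℝ) < 1/κ)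
    rwa [← Real.rpow_mul hx, mul_one_div_cancel hκ.ne', Real.rpow_one] at h2
  · intro h
    have h2 := Real.rpow_lt_rpow hx h hκ
    rwa [← Real.rpow_mul hb, one_div_mul_cancel hκ.ne', Real.rpow_one] at h2

theorem quadratic_form_comparison
    (Ω : Set E2)
    (hΩ : (∃ R > 0, Ω = Metric.ball 0 R) ∨
      (∃ a b : ℝ, 0 < a ∧ a < b ∧ Ω = {x : E2 | a < ‖x‖ ∧ ‖x‖ < b}))
    (α : ℝ) (hα : 0 < α) (κ : ℝ) (hκ : κ = 2 / (α + 2))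
    (f : ℝ → ℝ) (hf : ContDiff ℝ 1 f)
    (v ψ : E2 → ℝ)
    (hv : ContDiffOn ℝ 1 v (closure (Tk κ ⁻¹' Ω)))
    (hψ : ContDiffOn ℝ 1 ψ (closure (Tk κ ⁻¹' Ω)))
    (u φ : E2 → ℝ)
    (hu : u = v ∘ Tk (1 / κ)) (hφ : φ = ψ ∘ Tk (1 / κ))
    (hint₁ : IntegrableOn (fun y => ‖gradient ψ y‖ ^ 2) (Tk κ ⁻¹' Ω))
    (hint₂ : IntegrableOn (fun y => |deriv f (v y)| * ψ y ^ 2) (Tk κ ⁻¹' Ω))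
    (hint₃ : IntegrableOn (fun x => ‖gradient φ x‖ ^ 2) Ω)
    (hint₄ : IntegrableOn (fun x => ‖x‖ ^ α * |deriv f (u x)| * φ x ^ 2) Ω) :
    (∫ y in Tk κ ⁻¹' Ω, (‖gradient ψ y‖ ^ 2 - κ ^ 2 * deriv f (v y) * ψ y ^ 2)) ≥
      κ * ∫ x in Ω, (‖gradient φ x‖ ^ 2 - ‖x‖ ^ α * deriv f (u x) * φ x ^ 2) := by
  have hα2 : (0:ℝ) < α + 2 := by linarith
  have hκ0 : 0 < κ := by rw [hκ]; positivity
  have hκ1 : κ < 1 := by rw [hκ, div_lt_one hα2]; linarith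
  have hκα : κ * (α + 2) = 2 := by rw [hκ]; field_simp
  set s : Set E2 := Tk κ ⁻¹' Ω with hs
  have hΩopen : IsOpen Ω := by
    rcases hΩ with ⟨R, hR, rfl⟩ | ⟨a, b, ha, hab, rfl⟩
    · exact Metric.isOpen_ball
    · exact (isOpen_lt continuous_const continuous_norm).inter
        (isOpen_lt continuous_norm continuous_const)
  have hsopen : IsOpen s := by
    rcases hΩ with ⟨R, hR, rfl⟩ | ⟨a, b, ha, hab, rfl⟩
    · have : s = Metric.ball (0:E2) (R ^ (1/κ)) := by
        ext y
        simp only [hs, Set.mem_preimage, mem_ball_zero_iff]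
        rw [norm_Tk κ hκ0]
        exact rpow_lt_iff_right hR.le (norm_nonneg y) hκ0
      rw [this]; exact Metric.isOpen_ball
    · have : s = {y : E2 | a ^ (1/κ) < ‖y‖ ∧ ‖y‖ < b ^ (1/κ)} := by
        ext y
        simp only [hs, Set.mem_preimage, Set.mem_setOf_eq]
        rw [norm_Tk κ hκ0, rpow_lt_iff_left ha.le (norm_nonneg y) hκ0,
          rpow_lt_iff_right (by linarith : (0:ℝ) ≤ b) (norm_nonneg y) hκ0]
      rw [this]
      exact (isOpen_lt continuous_const continuous_norm).inter
        (isOpen_lt continuous_norm continuous_const)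
  have hsm : MeasurableSet s := hsopen.measurableSet
  have hΩm : MeasurableSet Ω := hΩopen.measurableSet
  set s' : Set E2 := s \ {0} with hs'
  set Ω' : Set E2 := Ω \ {0} with hΩ'def
  have hs'm : MeasurableSet s' := hsm.diff (measurableSet_singleton 0)
  have hΩ'm : MeasurableSet Ω' := hΩm.diff (measurableSet_singleton 0)
  have h0 : (volume : Measure E2) {(0:E2)} = 0 := measure_singleton 0
  have hrs : volume.restrict s = volume.restrict s' :=
    (Measure.restrict_congr_set
      (diff_ae_eq_self.2 (measure_mono_null Set.inter_subset_right h0))).symm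
  have hrΩ : volume.restrict Ω = volume.restrict Ω' :=
    (Measure.restrict_congr_set
      (diff_ae_eq_self.2 (measure_mono_null Set.inter_subset_right h0))).symm
  -- basic pointwise facts
  have hmem : ∀ y ∈ s', Tk κ y ∈ Ω' := by
    intro y hy
    have hy0 : y ≠ 0 := by simpa using hy.2
    have hn : (0:ℝ) < ‖y‖ := norm_pos_iff.2 hy0
    refine ⟨hy.1, ?_⟩
    simp only [Set.mem_singleton_iff]
    intro h
    have hnt := norm_Tk κ hκ0 y
    rw [h, norm_zero] at hnt
    exact absurd hnt.symm (Real.rpow_pos_of_pos hn κ).ne'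
  have hTinv : ∀ z : E2, Tk (1/κ) (Tk κ z) = z := Tk_invol' κ hκ0
  have hψeq : ψ = φ ∘ Tk κ := by
    funext z
    rw [hφ]
    simp only [Function.comp_apply]
    rw [hTinv z]
  have huTk : ∀ y : E2, u (Tk κ y) = v y := by
    intro y; rw [hu]
    simp only [Function.comp_apply]
    rw [hTinv y]
  have hφTk : ∀ y : E2, φ (Tk κ y) = ψ y := by
    intro y; rw [hφ]
    simp only [Function.comp_apply]
    rw [hTinv y]
  have hmem' : ∀ x ∈ Ω, Tk (1/κ) x ∈ s := by
    intro x hx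
    simp only [hs, Set.mem_preimage, Tk_invol κ hκ0 x]
    exact hx
  have hψdiff : ∀ y ∈ s, DifferentiableAt ℝ ψ y := fun y hy =>
    (hψ.contDiffAt (mem_nhds_iff.2 ⟨s, subset_closure, hsopen, hy⟩)).differentiableAt one_ne_zero
  have hφdiff : ∀ x ∈ Ω', DifferentiableAt ℝ φ x := by
    intro x hx
    have hx0 : x ≠ 0 := by simpa using hx.2
    have h1 : DifferentiableAt ℝ (Tk (1/κ)) x := (hasFDerivAt_Tk_s19 (1/κ) hx0).differentiableAt
    have h2 : DifferentiableAt ℝ ψ (Tk (1/κ) x) := hψdiff _ (hmem' x hx.1)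
    rw [hφ]; exact h2.comp x h1
  have hgrad : ∀ y ∈ s', gradient ψ y = Dk κ y (gradient φ (Tk κ y)) := by
    intro y hy
    have hy0 : y ≠ 0 := by simpa using hy.2
    have hφd : HasFDerivAt φ (fderiv ℝ φ (Tk κ y)) (Tk κ y) := (hφdiff _ (hmem y hy)).hasFDerivAt
    have hcomp : HasFDerivAt ψ ((fderiv ℝ φ (Tk κ y)).comp (Dk κ y)) y := by
      rw [hψeq]; exact hφd.comp y (hasFDerivAt_Tk_s19 κ hy0)
    have hfd : fderiv ℝ ψ y = (fderiv ℝ φ (Tk κ y)).comp (Dk κ y) := hcomp.fderiv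
    apply ext_inner_right ℝ
    intro h
    have g1 : ∀ w : E2, (inner ℝ (gradient φ (Tk κ y)) w : ℝ) = fderiv ℝ φ (Tk κ y) w := by
      intro w; rw [gradient, InnerProductSpace.toDual_symm_apply]
    rw [gradient, InnerProductSpace.toDual_symm_apply, hfd, ContinuousLinearMap.comp_apply,
      Dk_symm, g1]
  -- change of variables
  have hinj : Set.InjOn (Tk κ) s' := by
    intro y1 _ y2 _ he
    have := congrArg (Tk (1/κ)) he
    rwa [hTinv, hTinv] at this
  have himg : Tk κ '' s' = Ω' := by
    apply Set.Subset.antisymm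
    · rintro x ⟨y, hy, rfl⟩; exact hmem y hy
    · intro x hx
      refine ⟨Tk (1/κ) x, ⟨hmem' x hx.1, ?_⟩, Tk_invol κ hκ0 x⟩
      simp only [Set.mem_singleton_iff]
      intro h
      apply hx.2
      have h2 := congrArg (Tk κ) h
      rw [Tk_invol κ hκ0, Tk_zero] at h2
      simpa using h2
  have hder : ∀ y ∈ s', HasFDerivWithinAt (Tk κ) (Dk κ y) s' y := fun y hy =>
    (hasFDerivAt_Tk_s19 κ (by simpa using hy.2)).hasFDerivWithinAt
  have hCoV : ∀ g : E2 → ℝ, ∫ x in Ω', g x = ∫ y in s', |(Dk κ y).det| * g (Tk κ y) := by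
    intro g
    rw [← himg, integral_image_eq_integral_abs_det_fderiv_smul volume hs'm hder hinj g]
    simp only [smul_eq_mul]
  -- integrability
  have hint₁' : IntegrableOn (fun y => ‖gradient ψ y‖ ^ 2) s' := hint₁.mono_set Set.diff_subset
  have hint₃' : IntegrableOn (fun x => ‖gradient φ x‖ ^ 2) Ω' := hint₃.mono_set Set.diff_subset
  have hcont_df : Continuous (deriv f) := hf.continuous_deriv le_rfl
  have hvconts : ContinuousOn v s := hv.continuousOn.mono subset_closure
  have hψconts : ContinuousOn ψ s := hψ.continuousOn.mono subset_closure
  have hJ : IntegrableOn (fun y => deriv f (v y) * ψ y ^ 2) s := by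
    refine hint₂.mono' ?_ ?_
    · exact ((hcont_df.comp_continuousOn hvconts).mul (hψconts.pow 2)).aestronglyMeasurable hsm
    · refine Filter.Eventually.of_forall fun y => ?_
      rw [Real.norm_eq_abs, abs_mul, abs_of_nonneg (sq_nonneg (ψ y))]
  have hTinvcont : ContinuousOn (Tk (1/κ)) Ω' := fun x hx =>
    ((hasFDerivAt_Tk_s19 (1/κ) (by simpa using hx.2)).differentiableAt.continuousAt).continuousWithinAt
  have hucont : ContinuousOn u Ω' := by
    rw [hu]
    exact hv.continuousOn.comp hTinvcont fun x hx => subset_closure (hmem' x hx.1)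
  have hφcont : ContinuousOn φ Ω' := by
    rw [hφ]
    exact hψ.continuousOn.comp hTinvcont fun x hx => subset_closure (hmem' x hx.1)
  have hnormα : Continuous (fun x : E2 => ‖x‖ ^ α) :=
    continuous_norm.rpow_const fun x => Or.inr hα.le
  have hK : IntegrableOn (fun x => ‖x‖ ^ α * deriv f (u x) * φ x ^ 2) Ω' := by
    refine (hint₄.mono_set Set.diff_subset).mono' ?_ ?_
    · exact ((hnormα.continuousOn.mul (hcont_df.comp_continuousOn hucont)).mul
        (hφcont.pow 2)).aestronglyMeasurable hΩ'm
    · refine Filter.Eventually.of_forall fun x => ?_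
      rw [Real.norm_eq_abs, abs_mul, abs_mul, abs_of_nonneg (sq_nonneg (φ x)),
        abs_of_nonneg (Real.rpow_nonneg (norm_nonneg x) α)]
  -- the four integrals
  set A := ∫ y in s', ‖gradient ψ y‖ ^ 2 with hA
  set B := ∫ y in s', deriv f (v y) * ψ y ^ 2 with hB
  set C := ∫ x in Ω', ‖gradient φ x‖ ^ 2 with hC
  set D := ∫ x in Ω', ‖x‖ ^ α * deriv f (u x) * φ x ^ 2 with hD
  have hJ' : IntegrableOn (fun y => κ ^ 2 * (deriv f (v y) * ψ y ^ 2)) s' :=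
    (hJ.mono_set Set.diff_subset).const_mul _
  have hsplit₁ : (∫ y in s', (‖gradient ψ y‖ ^ 2 - κ ^ 2 * deriv f (v y) * ψ y ^ 2))
      = A - κ ^ 2 * B := by
    have e : (fun y => ‖gradient ψ y‖ ^ 2 - κ ^ 2 * deriv f (v y) * ψ y ^ 2)
        = fun y => ‖gradient ψ y‖ ^ 2 - κ ^ 2 * (deriv f (v y) * ψ y ^ 2) := by
      funext y; ring
    rw [e, integral_sub hint₁' hJ', integral_const_mul]
  have hsplit₂ : (∫ x in Ω', (‖gradient φ x‖ ^ 2 - ‖x‖ ^ α * deriv f (u x) * φ x ^ 2))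
      = C - D := integral_sub hint₃' hK
  -- D = κ * B
  have hDB : D = κ * B := by
    rw [hD, hCoV fun x => ‖x‖ ^ α * deriv f (u x) * φ x ^ 2]
    rw [setIntegral_congr_fun hs'm (g := fun y => κ * (deriv f (v y) * ψ y ^ 2)) ?_]
    · rw [integral_const_mul, hB]
    · intro y hy
      have hy0 : y ≠ 0 := by simpa using hy.2
      have hn : (0:ℝ) < ‖y‖ := norm_pos_iff.2 hy0
      simp only
      rw [abs_det_Dk κ hκ0 hy0, norm_Tk κ hκ0, huTk, hφTk, ← Real.rpow_mul (norm_nonneg y)]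
      have e2 : ‖y‖ ^ (2*κ-2) * ‖y‖ ^ (κ*α) = 1 := by
        rw [← Real.rpow_add hn, show 2*κ-2+κ*α = 0 by linarith, Real.rpow_zero]
      linear_combination (κ * (deriv f (v y) * ψ y ^ 2)) * e2
  -- κ * C ≤ A
  have hCA : κ * C ≤ A := by
    rw [hC, hCoV fun x => ‖gradient φ x‖ ^ 2, ← integral_const_mul]
    apply integral_mono_of_nonneg
    · exact Filter.Eventually.of_forall fun y => by positivity
    · exact hint₁'
    · filter_upwards [ae_restrict_mem hs'm] with y hy
      have hy0 : y ≠ 0 := by simpa using hy.2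
      rw [abs_det_Dk κ hκ0 hy0]
      have h1 := sq_norm_Dk_ge κ hκ0 hκ1.le hy0 (gradient φ (Tk κ y))
      rw [← hgrad y hy] at h1
      calc κ * (κ * ‖y‖ ^ (2*κ-2) * ‖gradient φ (Tk κ y)‖ ^ 2)
          = κ * (κ * ‖y‖ ^ (2*κ-2)) * ‖gradient φ (Tk κ y)‖ ^ 2 := by ring
        _ ≤ ‖gradient ψ y‖ ^ 2 := h1
  rw [ge_iff_le, hrs, hrΩ, hsplit₁, hsplit₂]
  have : κ * (C - D) = κ * C - κ ^ 2 * B := by rw [hDB]; ring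
  rw [this]
  linarith [hCA]
end
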